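/- Let R > 0, let J ⊆ ℝ be an interval, and let h̃₀ : J → ℝ be C¹. Define F̃(s,r) = (x(s,r), y(s,r), t(s,r)) = ((R+r)cos(s/R), (R+r)sin(s/R), h̃₀(s)) for s ∈ J and r ∈ ℝ, and set p̃ = y_s t_r − y_r t_s − (y/2)(x_s y_r − x_r y_s), q̃ = x_r t_s − x_s t_r + (x/2)(x_s y_r − x_r y_s), ω̃ = x_s y_r − x_r y_s (subscripts denoting partial derivatives). Then ω̃ = −(R+r)/R, p̃² + q̃² = (h̃₀'(s) − (R+r)²/(2R))², and hence the angle function satisfies √(p̃² + q̃²) = |h̃₀'(s) − (R+r)²/(2R)|. In particular, if the surface parameterized by F̃ on J×ℝ has no characteristic points (i.e. p̃²+q̃² never vanishes), then h̃₀'(s) < 0 for every s ∈ J. -/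

import Mathlib

/-- `x(s,r) = (R+r)cos(s/R)`. -/
noncomputable def xC (R s r : ℝ) : ℝ := (R + r) * Real.cos (s / R)

/-- `y(s,r) = (R+r)sin(s/R)`. -/
noncomputable def yC (R s r : ℝ) : ℝ := (R + r) * Real.sin (s / R)

/-- `t(s,r) = h̃₀(s)`. -/
noncomputable def tC (h₀ : ℝ → ℝ) (s r : ℝ) : ℝ := h₀ s

/-- `ω̃ = x_s y_r − x_r y_s`. -/
noncomputable def omC (R s r : ℝ) : ℝ :=
  deriv (fun s' => xC R s' r) s * deriv (fun r' => yC R s r') r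
    - deriv (fun r' => xC R s r') r * deriv (fun s' => yC R s' r) s

/-- `p̃ = y_s t_r − y_r t_s − (y/2)(x_s y_r − x_r y_s)`. -/
noncomputable def pC (R : ℝ) (h₀ : ℝ → ℝ) (s r : ℝ) : ℝ :=
  deriv (fun s' => yC R s' r) s * deriv (fun r' => tC h₀ s r') r
    - deriv (fun r' => yC R s r') r * deriv (fun s' => tC h₀ s' r) s
    - yC R s r / 2 * omC R s r

/-- `q̃ = x_r t_s − x_s t_r + (x/2)(x_s y_r − x_r y_s)`. -/
noncomputable def qC (R : ℝ) (h₀ : ℝ → ℝ) (s r : ℝ) : ℝ :=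
  deriv (fun r' => xC R s r') r * deriv (fun s' => tC h₀ s' r) s
    - deriv (fun s' => xC R s' r) s * deriv (fun r' => tC h₀ s r') r
    + xC R s r / 2 * omC R s r

lemma derivXs (R r s : ℝ) :
    deriv (fun s' => xC R s' r) s = (R + r) * (-Real.sin (s / R) * (1 / R)) := by
  unfold xC
  exact ((((hasDerivAt_id s).div_const R).cos).const_mul (R + r)).deriv

lemma derivYs (R r s : ℝ) :
    deriv (fun s' => yC R s' r) s = (R + r) * (Real.cos (s / R) * (1 / R)) := by
  unfold yC
  exact ((((hasDerivAt_id s).div_const R).sin).const_mul (R + r)).deriv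

lemma derivXr (R r s : ℝ) :
    deriv (fun r' => xC R s r') r = Real.cos (s / R) := by
  unfold xC
  have := (((hasDerivAt_id r).const_add R).mul_const (Real.cos (s / R))).deriv
  simpa using this

lemma derivYr (R r s : ℝ) :
    deriv (fun r' => yC R s r') r = Real.sin (s / R) := by
  unfold yC
  have := (((hasDerivAt_id r).const_add R).mul_const (Real.sin (s / R))).deriv
  simpa using this

lemma derivTr (h₀ : ℝ → ℝ) (s r : ℝ) : deriv (fun r' => tC h₀ s r') r = 0 := by
  simp [tC]

lemma derivTs (h₀ : ℝ → ℝ) (s r : ℝ) : deriv (fun s' => tC h₀ s' r) s = deriv h₀ s := rfl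

lemma omC_eq (R : ℝ) (hR : R ≠ 0) (s r : ℝ) : omC R s r = -((R + r) / R) := by
  unfold omC
  rw [derivXs, derivYs, derivXr, derivYr]
  have hsc := Real.sin_sq_add_cos_sq (s / R)
  linear_combination (-(R + r) / R) * hsc

lemma pC_eq (R : ℝ) (hR : R ≠ 0) (h₀ : ℝ → ℝ) (s r : ℝ) :
    pC R h₀ s r = -Real.sin (s / R) * (deriv h₀ s - (R + r) ^ 2 / (2 * R)) := by
  unfold pC
  rw [derivYs, derivYr, derivTr, derivTs, omC_eq R hR, yC]
  field_simp
  ring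

lemma qC_eq (R : ℝ) (hR : R ≠ 0) (h₀ : ℝ → ℝ) (s r : ℝ) :
    qC R h₀ s r = Real.cos (s / R) * (deriv h₀ s - (R + r) ^ 2 / (2 * R)) := by
  unfold qC
  rw [derivXs, derivXr, derivTr, derivTs, omC_eq R hR, xC]
  field_simp
  ring

/-- for the parameterization `F̃(s,r) = ((R+r)cos(s/R), (R+r)sin(s/R), h̃₀(s))`
one has `ω̃ = −(R+r)/R`, `p̃² + q̃² = (h̃₀'(s) − (R+r)²/(2R))²`, hence the angle function is
`|h̃₀'(s) − (R+r)²/(2R)|`; and if the surface has no characteristic points on `J×ℝ`, then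
`h̃₀' < 0` on `J`. -/
theorem stmt17 (R : ℝ) (hR : 0 < R) (J : Set ℝ) (hJ : J.OrdConnected)
    (h₀ : ℝ → ℝ) (hh₀ : ContDiffOn ℝ 1 h₀ J) :
    (∀ s ∈ J, ∀ r : ℝ,
      omC R s r = -((R + r) / R) ∧
      pC R h₀ s r ^ 2 + qC R h₀ s r ^ 2 = (deriv h₀ s - (R + r) ^ 2 / (2 * R)) ^ 2 ∧
      Real.sqrt (pC R h₀ s r ^ 2 + qC R h₀ s r ^ 2)
        = |deriv h₀ s - (R + r) ^ 2 / (2 * R)|) ∧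
    ((∀ s ∈ J, ∀ r : ℝ, pC R h₀ s r ^ 2 + qC R h₀ s r ^ 2 ≠ 0) →
      ∀ s ∈ J, deriv h₀ s < 0) := by
  have hR0 : R ≠ 0 := ne_of_gt hR
  have key : ∀ s r : ℝ,
      pC R h₀ s r ^ 2 + qC R h₀ s r ^ 2 = (deriv h₀ s - (R + r) ^ 2 / (2 * R)) ^ 2 := by
    intro s r
    rw [pC_eq R hR0, qC_eq R hR0]
    have hsc := Real.sin_sq_add_cos_sq (s / R)
    nlinarith [hsc]
  constructor
  · intro s _ r
    refine ⟨omC_eq R hR0 s r, key s r, ?_⟩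
    rw [key s r, Real.sqrt_sq_eq_abs]
  · intro hnc s hs
    by_contra hge
    push_neg at hge
    set d := deriv h₀ s with hd
    set r : ℝ := Real.sqrt (2 * R * d) - R with hr
    have h2Rd : 0 ≤ 2 * R * d := by positivity
    have hRr : (R + r) ^ 2 = 2 * R * d := by
      rw [hr]
      have : R + (Real.sqrt (2 * R * d) - R) = Real.sqrt (2 * R * d) := by ring
      rw [this, Real.sq_sqrt h2Rd]
    have := hnc s hs r
    apply this
    rw [key s r, hRr]
    field_simp
    simp [hd]
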